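/- Let g ≥ 3, r ≥ 1, s ≥ 1 and μ be integers with gcd(μ, 2g−2) = 1. If g − 1 = r·s (the isotropic case), then both 𝒟 = 𝒟₊(g,r,s,μ) ∪ 𝒟₋(g,r,s,μ) and 𝒟̃ = 𝒟̃₊(g,r,s,μ) ∪ 𝒟̃₋(g,r,s,μ) are infinite. -/
import Mathlib


/-- The set `𝒟_ε(g,r,s,μ)` of determinants `d ≥ 1` for which the Pell-type equation
`d·r²·y² = (rx + 2(g−1))² − 4(g−1)(εr − rs + g−1)` has a solution with
`x ≡ μy (mod 2g−2)`. -/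
def Dset (g r s μ ε : ℤ) : Set ℤ :=
  {d : ℤ | 1 ≤ d ∧ ∃ x y : ℤ, x ≡ μ * y [ZMOD (2 * g - 2)] ∧
    d * r ^ 2 * y ^ 2
      = (r * x + 2 * (g - 1)) ^ 2 - 4 * (g - 1) * (ε * r - r * s + (g - 1))}

lemma Dset_infinite_aux (g r s μ : ℤ) (hg : 3 ≤ g) (hr : 1 ≤ r) (hs : 1 ≤ s)
    (hiso : g - 1 = r * s) : (Dset g r s μ 1).Infinite := by
  set a : ℤ := 2 * g - 2 with ha
  have ha4 : 4 ≤ a := by omega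
  -- t n = μ + 2s + a*(n + |μ| + 1)
  set t : ℕ → ℤ := fun n => μ + 2 * s + a * ((n : ℤ) + μ.natAbs + 1) with ht
  have htpos : ∀ n : ℕ, 2 * s + 4 ≤ t n := by
    intro n
    have h1 : -(μ.natAbs : ℤ) ≤ μ := by omega
    have h2 : (0:ℤ) ≤ (n : ℤ) := Int.ofNat_nonneg n
    have h3 : a * ((n : ℤ) + μ.natAbs + 1) ≥ 4 * ((n : ℤ) + μ.natAbs + 1) := by
      nlinarith
    simp only [ht]
    nlinarith
  have htmono : StrictMono t := by
    intro m n hmn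
    have : (m : ℤ) < n := by exact_mod_cast hmn
    have := ha4
    simp only [ht]
    nlinarith
  apply Set.infinite_of_injective_forall_mem
    (f := fun n : ℕ => (t n) ^ 2 - 4 * s)
  · intro m n hmn
    simp only at hmn
    have h1 : t m ^ 2 = t n ^ 2 := by linarith
    have hm := htpos m
    have hn := htpos n
    have : t m = t n := by nlinarith
    exact htmono.injective this
  · intro n
    refine ⟨by nlinarith [htpos n, hs], μ + a * ((n : ℤ) + μ.natAbs + 1), 1, ?_, ?_⟩
    · rw [Int.modEq_iff_dvd]
      exact ⟨-((n : ℤ) + μ.natAbs + 1), by ring⟩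
    · have hx : r * (μ + a * ((n : ℤ) + μ.natAbs + 1)) + 2 * (g - 1) = r * t n := by
        rw [ht, hiso]; ring
      rw [hx]
      have hr0 : (1:ℤ) * r - r * s + (g - 1) = r := by rw [hiso]; ring
      rw [hr0]
      have : 4 * (g - 1) * r = 4 * s * r ^ 2 := by rw [hiso]; ring
      rw [this]
      ring

/-- In the isotropic case `g − 1 = rs`, both `𝒟 = 𝒟₊ ∪ 𝒟₋` and
`𝒟̃ = 𝒟̃₊ ∪ 𝒟̃₋` are infinite. -/
theorem Dset_infinite_isotropic
    (g r s μ : ℤ) (hg : 3 ≤ g) (hr : 1 ≤ r) (hs : 1 ≤ s)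
    (hcop : Int.gcd μ (2 * g - 2) = 1) (hiso : g - 1 = r * s) :
    (Dset g r s μ 1 ∪ Dset g r s μ (-1)).Infinite ∧
    (Dset g s r μ 1 ∪ Dset g s r μ (-1)).Infinite := by
  constructor
  · exact (Dset_infinite_aux g r s μ hg hr hs hiso).mono Set.subset_union_left
  · exact (Dset_infinite_aux g s r μ hg hs hr (by linarith [hiso, mul_comm r s])).mono
      Set.subset_union_left
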